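/- For K symmetric positive definite, ⟨I−Q,K⟩ ≥ 0 for all Q ∈ SO(3), with equality if and only if Q = I. -/

import Mathlib

open Matrix

/-- `SO(3)`. -/
def SO3 (R : Matrix (Fin 3) (Fin 3) ℝ) : Prop :=
  Rᵀ * R = 1 ∧ R.det = 1

/-- for `K` symmetric positive definite, `⟨I−Q,K⟩ ≥ 0` for all `Q ∈ SO(3)`,
with equality iff `Q = I`. -/
theorem wahba_nonneg (K : Matrix (Fin 3) (Fin 3) ℝ) (hK : K.PosDef)
    (Q : Matrix (Fin 3) (Fin 3) ℝ) (hQ : SO3 Q) :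
    0 ≤ ((1 - Q)ᵀ * K).trace ∧ (((1 - Q)ᵀ * K).trace = 0 ↔ Q = 1) := by
  set M : Matrix (Fin 3) (Fin 3) ℝ := 1 - Q with hM
  set S : Matrix (Fin 3) (Fin 3) ℝ := (open MatrixOrder in CFC.sqrt K) with hS
  have hSS : S * S = K := by open MatrixOrder in exact CFC.sqrt_mul_sqrt_self K hK.posSemidef.nonneg
  have hSsymm : Sᵀ = S := by
    have := (open MatrixOrder in (CFC.sqrt_nonneg K).posSemidef).1
    simpa [Matrix.IsHermitian, Matrix.conjTranspose_eq_transpose_of_trivial] using this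
  set N : Matrix (Fin 3) (Fin 3) ℝ := M * S with hN
  -- symmetric K
  have hKsymm : Kᵀ = K := by
    simpa [Matrix.IsHermitian, Matrix.conjTranspose_eq_transpose_of_trivial] using hK.1
  -- key identity: trace (Mᵀ * K) = (1/2) * trace (Nᵀ * N)
  have htr1 : (M * K).trace = (Mᵀ * K).trace := by
    conv_lhs => rw [← Matrix.trace_transpose]
    rw [Matrix.transpose_mul, hKsymm, Matrix.trace_mul_comm]
  have hMM : Mᵀ * M = Mᵀ + M := by
    have : Qᵀ * Q = 1 := hQ.1
    simp only [hM, Matrix.transpose_sub, Matrix.transpose_one, Matrix.sub_mul,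
      Matrix.mul_sub, Matrix.mul_one, Matrix.one_mul, this]
    abel
  have hkey : (Nᵀ * N).trace = 2 * (Mᵀ * K).trace := by
    calc (Nᵀ * N).trace = (Sᵀ * Mᵀ * (M * S)).trace := by rw [hN, Matrix.transpose_mul]
      _ = ((Mᵀ * M) * (S * Sᵀ)).trace := by
          rw [show Sᵀ * Mᵀ * (M * S) = Sᵀ * (Mᵀ * M * S) by noncomm_ring,
            Matrix.trace_mul_comm,
            show Mᵀ * M * S * Sᵀ = Mᵀ * M * (S * Sᵀ) by noncomm_ring]
      _ = ((Mᵀ + M) * K).trace := by rw [hMM, hSsymm, hSS]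
      _ = (Mᵀ * K).trace + (M * K).trace := by rw [Matrix.add_mul, Matrix.trace_add]
      _ = 2 * (Mᵀ * K).trace := by rw [htr1]; ring
  have hsq : (Nᵀ * N).trace = ∑ i : Fin 3, ∑ j : Fin 3, (N j i)^2 := by
    simp [Matrix.trace, Matrix.diag, Matrix.mul_apply, sq]
  have hnonneg : 0 ≤ (Nᵀ * N).trace := by
    rw [hsq]
    positivity
  constructor
  · linarith [hkey ▸ hnonneg]
  constructor
  · intro h0
    have hN0 : N = 0 := by
      have h : ∑ i : Fin 3, ∑ j : Fin 3, (N j i)^2 = 0 := by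
        rw [← hsq, hkey, h0]; ring
      ext j i
      have h1 := (Finset.sum_eq_zero_iff_of_nonneg (fun i _ => Finset.sum_nonneg
        (fun j _ => sq_nonneg (N j i)))).mp h i (Finset.mem_univ i)
      have h2 := (Finset.sum_eq_zero_iff_of_nonneg
        (fun j _ => sq_nonneg (N j i))).mp h1 j (Finset.mem_univ j)
      simpa using pow_eq_zero_iff (n := 2) (by norm_num) |>.mp h2
    have hMK : M * K = 0 := by
      rw [← hSS, ← Matrix.mul_assoc, ← hN, hN0, Matrix.zero_mul]
    have hKu : IsUnit K.det := hK.det_pos.ne'.isUnit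
    have : M = 0 := by
      calc M = M * K * K⁻¹ := (Matrix.mul_nonsing_inv_cancel_right K M hKu).symm
        _ = 0 := by rw [hMK, Matrix.zero_mul]
    have := sub_eq_zero.mp (hM ▸ this)
    exact this.symm
  · intro h
    rw [hM, h, sub_self, Matrix.transpose_zero, Matrix.zero_mul, Matrix.trace_zero]
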